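/- arXiv:1210.0395 — 4 statements merged into one kernel-verified Lean document; each statement's English description precedes it below -/
import Mathlib

section
/- Let g be the 6-dimensional Lie algebra with complex structure defined by dω¹ = dω² = 0, dω³ = ρ ω¹² + ω^{1 1̄} + λ ω^{1 2̄} + D ω^{2 2̄} (Family I). Then the (2,2)-form ω^{12}∧ω̄^{12} lies in the image of ∂∂̄ : Λ^{1,1} → Λ^{2,2} if and only if 2 Re D − λ² − ρ ≠ 0; concretely, ∂∂̄(ω^{3 3̄}) = (2 Re D − λ² − ρ) ω^{12 1̄2̄}, and ∂∂̄ vanishes on all other basic (1,1)-forms ω^{j k̄} with (j,k) ≠ (3,3). -/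
/- STATEMENT 2.  Exterior-algebra model of the complexified Chevalley-Eilenberg complex of a
6-dimensional Lie algebra with a Family I complex structure.  `d = ∂ + ∂̄` where `dl = ∂` and
`db = ∂̄` are the bidegree components; all three are antiderivations whose values on the
generators are given by the structure equations and their conjugates.  The claim: the (2,2)-form
ω^{12 1̄2̄} lies in the image of ∂∂̄ : Λ^{1,1} → Λ^{2,2} iff 2 Re D − λ² − ρ ≠ 0; concretely
∂∂̄(ω^{3 3̄}) = (2 Re D − λ² − ρ) ω^{12 1̄2̄} and ∂∂̄(ω^{j k̄}) = 0 for (j,k) ≠ (3,3). -/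

noncomputable section

open Submodule LinearMap

abbrev E : Type := ExteriorAlgebra ℂ (Fin 6 → ℂ)

def ω (i : Fin 3) : E := ExteriorAlgebra.ι ℂ (Pi.single (⟨i.1, by omega⟩ : Fin 6) (1 : ℂ))
def ωb (i : Fin 3) : E := ExteriorAlgebra.ι ℂ (Pi.single (⟨i.1 + 3, by omega⟩ : Fin 6) (1 : ℂ))

def IsAntider (d : E →ₗ[ℂ] E) : Prop :=
  d 1 = 0 ∧ ∀ (v : Fin 6 → ℂ) (y : E),
    d (ExteriorAlgebra.ι ℂ v * y) =
      d (ExteriorAlgebra.ι ℂ v) * y - ExteriorAlgebra.ι ℂ v * d y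

/-- Λ^{1,1}: the span of the (1,1)-monomials ω^{j k̄}. -/
def Lam11 : Submodule ℂ E := span ℂ (Set.range fun p : Fin 3 × Fin 3 => ω p.1 * ωb p.2)

/-! ### Auxiliary machinery -/

def e (i : Fin 6) : E := ExteriorAlgebra.ι ℂ (Pi.single i 1)

lemma w0 : ω 0 = e 0 := rfl
lemma w1 : ω 1 = e 1 := rfl
lemma w2 : ω 2 = e 2 := rfl
lemma wb0 : ωb 0 = e 3 := rfl
lemma wb1 : ωb 1 = e 4 := rfl
lemma wb2 : ωb 2 = e 5 := rfl

lemma esq (i : Fin 6) : e i * e i = 0 := ExteriorAlgebra.ι_sq_zero _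
lemma esq' (i : Fin 6) (x : E) : e i * (e i * x) = 0 := by rw [← mul_assoc, esq, zero_mul]
lemma eswap {i j : Fin 6} (h : j < i) : e i * e j = -(e j * e i) := by
  have := ExteriorAlgebra.ι_add_mul_swap (R := ℂ) (M := Fin 6 → ℂ)
    (Pi.single j (1:ℂ)) (Pi.single i (1:ℂ))
  exact eq_neg_of_add_eq_zero_left (by rw [add_comm]; exact this)
lemma eswap' {i j : Fin 6} (h : j < i) (x : E) : e i * (e j * x) = -(e j * (e i * x)) := by
  rw [← mul_assoc, eswap h, neg_mul, mul_assoc]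
lemma ader {dd : E →ₗ[ℂ] E} (h : IsAntider dd) (i : Fin 6) (y : E) :
    dd (e i * y) = dd (e i) * y - e i * dd y := h.2 _ y

/-- The basic (2,2)-monomial `ω¹²∧ω̄¹²`. -/
def X : E := e 0 * (e 1 * (e 3 * e 4))

def idx : Fin 4 → Fin 6 := ![0, 1, 3, 4]

def projL : (Fin 6 → ℂ) →ₗ[ℂ] (Fin 4 → ℂ) := LinearMap.pi fun j => LinearMap.proj (idx j)

def detA : (Fin 6 → ℂ) [⋀^Fin 4]→ₗ[ℂ] ℂ := Matrix.detRowAlternating.compLinearMap projL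

def F : E →ₗ[ℂ] ℂ :=
  ExteriorAlgebra.liftAlternating (fun i => if h : i = 4 then h ▸ detA else 0)

lemma X_def : X = e 0 * (e 1 * (e 3 * e 4)) := rfl

lemma FX : F X = 1 := by
  have hX : X = ExteriorAlgebra.ιMulti ℂ 4 (fun j => Pi.single (idx j) (1:ℂ)) := by
    rw [ExteriorAlgebra.ιMulti_apply, X_def]
    simp only [List.ofFn_succ, List.ofFn_zero, List.prod_cons, List.prod_nil, mul_one]
    rfl
  rw [hX, F, ExteriorAlgebra.liftAlternating_apply_ιMulti]
  rw [dif_pos rfl]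
  show Matrix.detRowAlternating (fun i => projL (Pi.single (idx i) 1)) = 1
  have h1 : (fun i => projL (Pi.single (idx i) (1:ℂ))) = (1 : Matrix (Fin 4) (Fin 4) ℂ) := by
    funext i j
    simp only [projL, LinearMap.pi_apply, LinearMap.proj_apply, Matrix.one_apply,
      Pi.single_apply]
    fin_cases i <;> fin_cases j <;> simp [idx] <;> decide
  rw [h1]
  show (1 : Matrix (Fin 4) (Fin 4) ℂ).det = 1
  exact Matrix.det_one

lemma Xne : X ≠ 0 := fun h => one_ne_zero (by rw [← FX, h, map_zero])

set_option maxHeartbeats 4000000 in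
theorem del_delbar_image_family_I
    (ρ lam : ℝ) (D : ℂ) (hρ : ρ = 0 ∨ ρ = 1) (hlam : 0 ≤ lam)
    (d dl db : E →ₗ[ℂ] E)
    (hd : IsAntider d) (hdl : IsAntider dl) (hdb : IsAntider db)
    (hsum : d = dl + db)
    (h1l : dl (ω 0) = 0) (h1b : db (ω 0) = 0)
    (h2l : dl (ω 1) = 0) (h2b : db (ω 1) = 0)
    (h3l : dl (ω 2) = (ρ : ℂ) • (ω 0 * ω 1))
    (h3b : db (ω 2) = ω 0 * ωb 0 + (lam : ℂ) • (ω 0 * ωb 1) + D • (ω 1 * ωb 1))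
    (h1lc : dl (ωb 0) = 0) (h1bc : db (ωb 0) = 0)
    (h2lc : dl (ωb 1) = 0) (h2bc : db (ωb 1) = 0)
    (h3lc : dl (ωb 2) = ωb 0 * ω 0 + (lam : ℂ) • (ωb 0 * ω 1)
      + (starRingEnd ℂ D) • (ωb 1 * ω 1))
    (h3bc : db (ωb 2) = (ρ : ℂ) • (ωb 0 * ωb 1)) :
    (ω 0 * ω 1 * ωb 0 * ωb 1 ∈ Submodule.map (dl ∘ₗ db) Lam11 ↔
        2 * D.re - lam ^ 2 - ρ ≠ 0) ∧
      dl (db (ω 2 * ωb 2)) =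
        ((2 * D.re - lam ^ 2 - ρ : ℝ) : ℂ) • (ω 0 * ω 1 * ωb 0 * ωb 1) ∧
      ∀ j k : Fin 3, ¬(j = 2 ∧ k = 2) → dl (db (ω j * ωb k)) = 0 := by
  simp only [w0, w1, w2, wb0, wb1, wb2] at h1l h1b h2l h2b h3l h3b h1lc h1bc h2lc h2bc h3lc h3bc
  have hρ2 : ρ ^ 2 = ρ := by rcases hρ with h | h <;> simp [h]
  -- the scalar identity
  have hc : ((2 * D.re - lam ^ 2 - ρ : ℝ) : ℂ)
      = D + starRingEnd ℂ D - ((lam : ℂ)) ^ 2 - ((ρ : ℂ)) ^ 2 := by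
    rw [Complex.add_conj]
    rcases hρ with h | h <;> subst h <;> push_cast <;> ring
  -- the key computation
  have key : dl (db (e 2 * e 5))
      = (D + starRingEnd ℂ D - ((lam : ℂ)) ^ 2 - ((ρ : ℂ)) ^ 2) • X := by
    rw [X_def]
    revert h3l h3b h3lc h3bc
    generalize ((lam : ℂ)) = L
    generalize ((ρ : ℂ)) = R
    generalize (starRingEnd ℂ D) = Dc
    intro h3l h3b h3lc h3bc
    simp (config := { decide := true }) [ader hdl, ader hdb, h1l, h1b, h2l, h2b, h3l, h3b,
      h1lc, h1bc, h2lc, h2bc, h3lc, h3bc, eswap, eswap', esq, esq', mul_assoc,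
      smul_mul_assoc, mul_smul_comm, mul_add, add_mul, smul_sub, smul_add, smul_smul]
    match_scalars <;> ring
  -- the vanishing on the other monomials
  have zero : ∀ j k : Fin 3, ¬(j = 2 ∧ k = 2) → dl (db (ω j * ωb k)) = 0 := by
    intro j k hjk
    have hj : j = 0 ∨ j = 1 ∨ j = 2 := by omega
    have hk : k = 0 ∨ k = 1 ∨ k = 2 := by omega
    rcases hj with rfl | rfl | rfl <;> rcases hk with rfl | rfl | rfl
    on_goal 9 => exact absurd ⟨rfl, rfl⟩ hjk
    all_goals
      simp only [w0, w1, w2, wb0, wb1, wb2]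
      revert h3l h3b h3lc h3bc
      generalize ((lam : ℂ)) = L
      generalize ((ρ : ℂ)) = R
      generalize (starRingEnd ℂ D) = Dc
      intro h3l h3b h3lc h3bc
      simp (config := { decide := true }) [ader hdl, ader hdb, h1l, h1b, h2l, h2b, h3l,
        h3b, h1lc, h1bc, h2lc, h2bc, h3lc, h3bc, eswap, eswap', esq, esq', mul_assoc,
        smul_mul_assoc, mul_smul_comm, mul_add, add_mul, smul_sub, smul_add, smul_smul]
  have hXg : ω 0 * ω 1 * ωb 0 * ωb 1 = X := by
    rw [w0, w1, wb0, wb1, X_def, mul_assoc, mul_assoc]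
  have key' : dl (db (ω 2 * ωb 2)) = ((2 * D.re - lam ^ 2 - ρ : ℝ) : ℂ) • X := by
    rw [w2, wb2, key, hc]
  refine ⟨?_, by rw [key', hXg], zero⟩
  rw [hXg]
  constructor
  · rintro hmem hzero
    -- if the scalar is zero, the map kills all of Lam11, contradiction with X ≠ 0
    have hz : ∀ x ∈ Lam11, (dl ∘ₗ db) x = 0 := by
      intro x hx
      induction hx using Submodule.span_induction with
      | mem x hx =>
        obtain ⟨⟨j, k⟩, rfl⟩ := hx
        by_cases h : j = 2 ∧ k = 2
        · obtain ⟨rfl, rfl⟩ := h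
          simp only [LinearMap.comp_apply, key', hzero]
          simp
        · simpa using zero j k h
      | zero => simp
      | add x y _ _ hx hy => simp [map_add, hx, hy]
      | smul c x _ hx => simp [map_smul, hx]
    obtain ⟨y, hy, hxy⟩ := hmem
    exact Xne (by rw [← hxy, hz y hy])
  · intro hne
    have hmem0 : (dl ∘ₗ db) (ω 2 * ωb 2) ∈ Submodule.map (dl ∘ₗ db) Lam11 :=
      Submodule.mem_map_of_mem (Submodule.subset_span ⟨(2, 2), rfl⟩)
    have : (((2 * D.re - lam ^ 2 - ρ : ℝ) : ℂ))⁻¹ • (dl ∘ₗ db) (ω 2 * ωb 2)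
        ∈ Submodule.map (dl ∘ₗ db) Lam11 := Submodule.smul_mem _ _ hmem0
    have hcast : (((2 * D.re - lam ^ 2 - ρ : ℝ) : ℂ)) ≠ 0 := by
      exact_mod_cast hne
    rwa [LinearMap.comp_apply, key', inv_smul_smul₀ hcast] at this
end
end

section
/- Let g be a 6-dimensional nilpotent Lie algebra with an abelian complex structure J (i.e. ∂ vanishes on g^{1,0}, equivalently d(g^{1,0}) ⊆ Λ^{1,1}), and suppose g is not abelian. Then dim H^{0,1}_∂̄(g) = 3 > dim H^{0,1}_BC(g), where H^{0,1}_∂̄(g) = {α ∈ g^{0,1} : ∂̄α = 0} and H^{0,1}_BC(g) = {α ∈ g^{0,1} : dα = 0}. -/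
/- STATEMENT 4.  Exterior-algebra model of a 6-dimensional nilpotent Lie algebra g with an
abelian complex structure J (d(g^{1,0}) ⊆ Λ^{1,1}, equivalently ∂ = 0 on g^{1,0}), with g not
abelian.  `σ` is the conjugation (a star-semilinear multiplicative involution commuting with d
and exchanging ω^j and ω̄^j).  Conclusion: dim H^{0,1}_∂̄(g) = dim{α ∈ g^{0,1} : ∂̄α = 0} = 3,
while dim H^{0,1}_BC(g) = dim{α ∈ g^{0,1} : dα = 0} < 3. -/

noncomputable section

open Submodule LinearMap

def Lam20 : Submodule ℂ E := span ℂ (Set.range fun p : Fin 3 × Fin 3 => ω p.1 * ω p.2)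
def Lam02 : Submodule ℂ E := span ℂ (Set.range fun p : Fin 3 × Fin 3 => ωb p.1 * ωb p.2)

/-- contraction with the k-th dual basis vector -/
def φ (k : Fin 6) : E →ₗ[ℂ] E := CliffordAlgebra.contractLeft (LinearMap.proj k)

lemma φ_ι_mul (k : Fin 6) (v w : Fin 6 → ℂ) :
    φ k (ExteriorAlgebra.ι ℂ v * ExteriorAlgebra.ι ℂ w) = v k • ExteriorAlgebra.ι ℂ w
      - w k • ExteriorAlgebra.ι ℂ v := by
  rw [φ, CliffordAlgebra.contractLeft_ι_mul, CliffordAlgebra.contractLeft_ι]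
  simp [Algebra.smul_def, Algebra.commutes, mul_comm]

lemma single_apply_lt (i : Fin 3) (k : Fin 3) :
    (Pi.single (⟨i.1 + 3, by omega⟩ : Fin 6) (1 : ℂ) : Fin 6 → ℂ) (⟨k.1, by omega⟩ : Fin 6) = 0 := by
  rw [Pi.single_apply, if_neg]
  simp [Fin.ext_iff]; omega

lemma single_apply_eq (i k : Fin 3) :
    (Pi.single (⟨i.1, by omega⟩ : Fin 6) (1 : ℂ) : Fin 6 → ℂ) (⟨k.1, by omega⟩ : Fin 6)
      = if k = i then 1 else 0 := by
  rw [Pi.single_apply]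
  simp [Fin.ext_iff]

lemma φ_ω_mul_ωb (k : Fin 3) (a b : Fin 3) :
    φ ⟨k.1, by omega⟩ (ω a * ωb b) = if a = k then ωb b else 0 := by
  rw [ω, ωb, φ_ι_mul, single_apply_lt, zero_smul, sub_zero, single_apply_eq]
  rcases eq_or_ne a k with h | h
  · subst h; simp
  · simp [h, Ne.symm h]

lemma φ_ωb_mul_ωb (k : Fin 3) (a b : Fin 3) :
    φ ⟨k.1, by omega⟩ (ωb a * ωb b) = 0 := by
  rw [ωb, ωb, φ_ι_mul, single_apply_lt, single_apply_lt, zero_smul, zero_smul, sub_zero]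

lemma ωb_linearIndependent : LinearIndependent ℂ ωb := by
  have h : LinearIndependent ℂ fun j : Fin 3 =>
      (Pi.single (⟨j.1 + 3, by omega⟩ : Fin 6) (1 : ℂ) : Fin 6 → ℂ) := by
    have := (Pi.basisFun ℂ (Fin 6)).linearIndependent.comp
      (fun j : Fin 3 => (⟨j.1 + 3, by omega⟩ : Fin 6))
      (fun a b hab => by simpa [Fin.ext_iff] using hab)
    have heq : (fun j : Fin 3 => (Pi.single (⟨j.1 + 3, by omega⟩ : Fin 6) (1 : ℂ) : Fin 6 → ℂ))
        = (⇑(Pi.basisFun ℂ (Fin 6)) ∘ fun j : Fin 3 => (⟨j.1 + 3, by omega⟩ : Fin 6)) := by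
      funext j
      simp [Function.comp, Pi.basisFun_apply]
    rw [heq]
    exact this
  exact h.map' (ExteriorAlgebra.ι ℂ)
    (LinearMap.ker_eq_bot.mpr (ExteriorAlgebra.ι_leftInverse.injective))

lemma lam02_φ_zero {x : E} (hx : x ∈ Lam02) (k : Fin 3) : φ ⟨k.1, by omega⟩ x = 0 := by
  induction hx using Submodule.span_induction with
  | mem y hy => obtain ⟨p, rfl⟩ := hy; exact φ_ωb_mul_ωb k p.1 p.2
  | zero => simp
  | add y z _ _ hy hz => rw [map_add, hy, hz, add_zero]
  | smul c y _ hy => rw [map_smul, hy, smul_zero]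

lemma lam11_eq_zero {x : E} (hx : x ∈ Lam11)
    (h : ∀ k : Fin 3, φ ⟨k.1, by omega⟩ x = 0) : x = 0 := by
  rw [Lam11, mem_span_range_iff_exists_fun] at hx
  obtain ⟨c, rfl⟩ := hx
  have hc : ∀ k b : Fin 3, c (k, b) = 0 := by
    intro k b
    have hk := h k
    rw [map_sum] at hk
    simp_rw [map_smul, φ_ω_mul_ωb] at hk
    rw [Fintype.sum_prod_type] at hk
    have : (∑ a : Fin 3, ∑ b : Fin 3, c (a, b) • if a = k then ωb b else 0)
        = ∑ b : Fin 3, c (k, b) • ωb b := by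
      rw [Finset.sum_eq_single k]
      · simp
      · intro a _ hak; simp [hak]
      · simp
    rw [this] at hk
    exact (Fintype.linearIndependent_iff.mp ωb_linearIndependent _ hk) b
  simp [hc]


theorem abelian_dolbeault_vs_bott_chern_01
    (d dl db : E →ₗ[ℂ] E)
    (hd : IsAntider d) (hdl : IsAntider dl) (hdb : IsAntider db)
    (hsum : d = dl + db)
    (hd2 : ∀ x : E, d (d x) = 0)
    -- bidegree conditions on the components of d in degree one
    (hbideg10 : ∀ j : Fin 3, dl (ω j) ∈ Lam20 ∧ db (ω j) ∈ Lam11)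
    (hbideg01 : ∀ j : Fin 3, dl (ωb j) ∈ Lam11 ∧ db (ωb j) ∈ Lam02)
    -- conjugation
    (σ : E →ₛₗ[starRingEnd ℂ] E)
    (hσω : ∀ j : Fin 3, σ (ω j) = ωb j) (hσωb : ∀ j : Fin 3, σ (ωb j) = ω j)
    (hσmul : ∀ x y : E, σ (x * y) = σ x * σ y)
    (hσd : ∀ x : E, σ (d x) = d (σ x))
    -- J is abelian: d(g^{1,0}) ⊆ Λ^{1,1} (and, by conjugation, d(g^{0,1}) ⊆ Λ^{1,1})
    (habel : ∀ j : Fin 3, d (ω j) ∈ Lam11)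
    -- g is not abelian
    (hnonab : ∃ j : Fin 3, d (ω j) ≠ 0) :
    Module.finrank ℂ ↥(span ℂ {ωb 0, ωb 1, ωb 2} ⊓ ker db) = 3 ∧
      Module.finrank ℂ ↥(span ℂ {ωb 0, ωb 1, ωb 2} ⊓ ker d) < 3 := by
  -- σ preserves Λ^{1,1}
  have hσ11 : ∀ x ∈ Lam11, σ x ∈ Lam11 := by
    intro x hx
    induction hx using Submodule.span_induction with
    | mem y hy =>
      obtain ⟨p, rfl⟩ := hy
      rw [hσmul, hσω, hσωb]
      have hanti : ωb p.1 * ω p.2 = -(ω p.2 * ωb p.1) := by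
        have := ExteriorAlgebra.ι_add_mul_swap (R := ℂ)
          (Pi.single (⟨p.2.1, by omega⟩ : Fin 6) (1 : ℂ) : Fin 6 → ℂ)
          (Pi.single (⟨p.1.1 + 3, by omega⟩ : Fin 6) (1 : ℂ) : Fin 6 → ℂ)
        rw [ω, ωb]
        exact eq_neg_of_add_eq_zero_left (by rw [add_comm]; exact this)
      rw [hanti]
      exact neg_mem (Submodule.subset_span ⟨(p.2, p.1), rfl⟩)
    | zero => simpa using zero_mem Lam11
    | add y z _ _ hy hz => rw [map_add]; exact add_mem hy hz
    | smul c y _ hy => rw [map_smulₛₗ]; exact smul_mem _ _ hy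
  -- σ is an involution on Λ^{1,1}
  have hσσ : ∀ x ∈ Lam11, σ (σ x) = x := by
    intro x hx
    induction hx using Submodule.span_induction with
    | mem y hy =>
      obtain ⟨p, rfl⟩ := hy
      rw [hσmul, hσω, hσωb, hσmul, hσω, hσωb]
    | zero => simp
    | add y z _ _ hy hz => rw [map_add, map_add, hy, hz]
    | smul c y _ hy => rw [map_smulₛₗ, map_smulₛₗ, hy, RingHomCompTriple.comp_apply]; simp
  -- d(ωb j) ∈ Λ^{1,1}
  have hdωb11 : ∀ j : Fin 3, d (ωb j) ∈ Lam11 := by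
    intro j
    rw [← hσω j, ← hσd]
    exact hσ11 _ (habel j)
  -- key fact : ∂̄(ωb j) = 0
  have hdb0 : ∀ j : Fin 3, db (ωb j) = 0 := by
    intro j
    have h11 : db (ωb j) ∈ Lam11 := by
      have : db (ωb j) = d (ωb j) - dl (ωb j) := by rw [hsum]; simp
      rw [this]
      exact sub_mem (hdωb11 j) (hbideg01 j).1
    refine lam11_eq_zero h11 (fun k => lam02_φ_zero (hbideg01 j).2 k)
  -- the span and its rank
  have hsetrange : ({ωb 0, ωb 1, ωb 2} : Set E) = Set.range ωb := by
    ext x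
    constructor
    · rintro (rfl | rfl | rfl)
      exacts [⟨0, rfl⟩, ⟨1, rfl⟩, ⟨2, rfl⟩]
    · rintro ⟨j, rfl⟩
      fin_cases j <;> simp
  have hrank : Module.finrank ℂ ↥(span ℂ ({ωb 0, ωb 1, ωb 2} : Set E)) = 3 := by
    rw [hsetrange, finrank_span_eq_card ωb_linearIndependent, Fintype.card_fin]
  have hfd : FiniteDimensional ℂ ↥(span ℂ ({ωb 0, ωb 1, ωb 2} : Set E)) :=
    FiniteDimensional.span_of_finite ℂ (Set.toFinite _)
  constructor
  · -- first part
    have hle : span ℂ ({ωb 0, ωb 1, ωb 2} : Set E) ≤ ker db := by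
      rw [span_le]
      rintro x (rfl | rfl | rfl) <;> simp [mem_ker, hdb0]
    rw [inf_eq_left.mpr hle, hrank]
  · -- second part
    obtain ⟨j, hj⟩ := hnonab
    have hdωbj : d (ωb j) ≠ 0 := by
      intro h0
      apply hj
      have : σ (d (ω j)) = 0 := by rw [hσd, hσω, h0]
      have := congrArg σ this
      rwa [hσσ _ (habel j), map_zero] at this
    have hlt : span ℂ ({ωb 0, ωb 1, ωb 2} : Set E) ⊓ ker d
        < span ℂ ({ωb 0, ωb 1, ωb 2} : Set E) := by
      refine lt_of_le_of_ne inf_le_left (fun heq => hdωbj ?_)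
      have hmem : ωb j ∈ span ℂ ({ωb 0, ωb 1, ωb 2} : Set E) := by
        apply Submodule.subset_span
        fin_cases j <;> simp
      rw [← heq] at hmem
      exact hmem.2
    calc Module.finrank ℂ ↥(span ℂ ({ωb 0, ωb 1, ωb 2} : Set E) ⊓ ker d)
        < Module.finrank ℂ ↥(span ℂ ({ωb 0, ωb 1, ωb 2} : Set E)) :=
          Submodule.finrank_lt_finrank_of_lt hlt
      _ = 3 := hrank


end
end

section
/- Let g be a 6-dimensional 2-step nilpotent Lie algebra with complex structure given by the Family I equations with ρ = 1: dω¹ = dω² = 0, dω³ = ω¹² + ω^{1 1̄} + λ ω^{1 2̄} + D ω^{2 2̄}. Then H^{3,2}_∂̄(g) is spanned by the classes of ω^{123 1̄3̄} and ω^{123 2̄3̄}, H^{3,2}_A(g) is spanned by the same classes, and the natural map H^{3,2}_∂̄(g) → H^{3,2}_A(g) is injective. -/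
/- STATEMENT 5.  Exterior-algebra model of a 6-dimensional 2-step nilpotent Lie algebra with a
Family I complex structure with ρ = 1.  `d = ∂ + ∂̄` with `dl = ∂`, `db = ∂̄`.  Claims:
H^{3,2}_∂̄(g) = (Λ^{3,2} ∩ ker ∂̄)/∂̄(Λ^{3,1}) is spanned by the classes of a = ω^{123 1̄3̄} and
b = ω^{123 2̄3̄}; H^{3,2}_A(g) = Λ^{3,2}/(∂Λ^{2,2} + ∂̄Λ^{3,1}) is spanned by the same classes;
and the natural map H^{3,2}_∂̄ → H^{3,2}_A is injective. -/

noncomputable section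

open Submodule LinearMap

def Lam22 : Submodule ℂ E :=
  span ℂ (Set.range fun p : (Fin 3 × Fin 3) × Fin 3 × Fin 3 =>
    ω p.1.1 * ω p.1.2 * ωb p.2.1 * ωb p.2.2)
def Lam31 : Submodule ℂ E :=
  span ℂ (Set.range fun k : Fin 3 => ω 0 * ω 1 * ω 2 * ωb k)
def Lam32 : Submodule ℂ E :=
  span ℂ {ω 0 * ω 1 * ω 2 * (ωb 0 * ωb 1), ω 0 * ω 1 * ω 2 * (ωb 0 * ωb 2),
    ω 0 * ω 1 * ω 2 * (ωb 1 * ωb 2)}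


-- ===== auxiliary machinery =====

def gE (m : Fin 6) : E := ExteriorAlgebra.ι ℂ (Pi.single m (1:ℂ))
lemma ω0 : ω 0 = gE 0 := rfl
lemma ω1 : ω 1 = gE 1 := rfl
lemma ω2 : ω 2 = gE 2 := rfl
lemma ωb0 : ωb 0 = gE 3 := rfl
lemma ωb1 : ωb 1 = gE 4 := rfl
lemma ωb2 : ωb 2 = gE 5 := rfl
lemma g_sq (m : Fin 6) : gE m * gE m = 0 := ExteriorAlgebra.ι_sq_zero _
lemma g_sq' (m : Fin 6) (y : E) : gE m * (gE m * y) = 0 := by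
  rw [← mul_assoc, g_sq, zero_mul]
lemma g_swap {m n : Fin 6} (_h : n < m) : gE m * gE n = -(gE n * gE m) :=
  eq_neg_of_add_eq_zero_left (ExteriorAlgebra.ι_add_mul_swap _ _)
lemma g_swap' {m n : Fin 6} (h : n < m) (y : E) :
    gE m * (gE n * y) = -(gE n * (gE m * y)) := by
  rw [← mul_assoc, g_swap h, neg_mul, mul_assoc]
lemma f0 (h : 0 < 3) : (⟨0,h⟩ : Fin 3) = 0 := rfl
lemma f1 (h : 1 < 3) : (⟨1,h⟩ : Fin 3) = 1 := rfl
lemma f2 (h : 2 < 3) : (⟨2,h⟩ : Fin 3) = 2 := rfl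
lemma der_g {d : E →ₗ[ℂ] E} (h : IsAntider d) (m : Fin 6) (y : E) :
    d (gE m * y) = d (gE m) * y - gE m * d y := h.2 _ y

def coef (lam : ℝ) (D : ℂ) : Fin 3 → Fin 3 → Fin 3 → Fin 3 → ℂ
  | 0, 2, 0, 2 => starRingEnd ℂ D
  | 2, 0, 0, 2 => -(starRingEnd ℂ D)
  | 0, 2, 2, 0 => -(starRingEnd ℂ D)
  | 2, 0, 2, 0 => starRingEnd ℂ D
  | 0, 2, 1, 2 => -(lam : ℂ)
  | 2, 0, 1, 2 => (lam : ℂ)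
  | 0, 2, 2, 1 => (lam : ℂ)
  | 2, 0, 2, 1 => -(lam : ℂ)
  | 1, 2, 1, 2 => 1
  | 2, 1, 1, 2 => -1
  | 1, 2, 2, 1 => -1
  | 2, 1, 2, 1 => 1
  | _, _, _, _ => 0

set_option maxHeartbeats 4000000 in
lemma dlC (lam : ℝ) (D : ℂ) (dl : E →ₗ[ℂ] E) (hdl : IsAntider dl)
    (h1l : dl (ω 0) = 0) (h2l : dl (ω 1) = 0) (h3l : dl (ω 2) = ω 0 * ω 1)
    (h1lc : dl (ωb 0) = 0) (h2lc : dl (ωb 1) = 0)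
    (h3lc : dl (ωb 2) = ωb 0 * ω 0 + (lam : ℂ) • (ωb 0 * ω 1)
      + (starRingEnd ℂ D) • (ωb 1 * ω 1)) :
    ∀ p q r s : Fin 3, dl (ω p * ω q * ωb r * ωb s) =
      coef lam D p q r s • (ω 0 * ω 1 * ω 2 * (ωb 0 * ωb 1)) := by
  simp only [ω0, ω1, ω2, ωb0, ωb1, ωb2] at h1l h2l h3l h1lc h2lc h3lc
  intro p q r s
  fin_cases p <;> fin_cases q <;> fin_cases r <;> fin_cases s <;>
    simp (config := { decide := true }) only [f0, f1, f2, coef, ω0, ω1, ω2, ωb0, ωb1, ωb2,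
      mul_assoc, der_g hdl, h1l, h2l, h3l, h1lc, h2lc, h3lc, map_neg, map_smul, map_add, map_sub,
      g_swap, g_swap', g_sq, g_sq', mul_neg, neg_mul, neg_neg, mul_add, add_mul, mul_sub, sub_mul,
      mul_zero, zero_mul, smul_mul_assoc, mul_smul_comm, map_zero, zero_sub, sub_zero, zero_add,
      add_zero, smul_zero, neg_zero, smul_neg, sub_self, sub_neg_eq_add,
      zero_smul, one_smul, neg_smul]

set_option maxHeartbeats 1000000 in
lemma dbA (lam : ℝ) (D : ℂ) (db : E →ₗ[ℂ] E) (hdb : IsAntider db)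
    (h1b : db (ω 0) = 0) (h2b : db (ω 1) = 0)
    (h3b : db (ω 2) = ω 0 * ωb 0 + (lam : ℂ) • (ω 0 * ωb 1) + D • (ω 1 * ωb 1))
    (h1bc : db (ωb 0) = 0) (h2bc : db (ωb 1) = 0)
    (h3bc : db (ωb 2) = ωb 0 * ωb 1) :
    db (ω 0 * ω 1 * ω 2 * ωb 0) = 0 ∧ db (ω 0 * ω 1 * ω 2 * ωb 1) = 0 ∧
    db (ω 0 * ω 1 * ω 2 * ωb 2) = -(ω 0 * ω 1 * ω 2 * (ωb 0 * ωb 1)) ∧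
    db (ω 0 * ω 1 * ω 2 * (ωb 0 * ωb 1)) = 0 ∧
    db (ω 0 * ω 1 * ω 2 * (ωb 0 * ωb 2)) = 0 ∧
    db (ω 0 * ω 1 * ω 2 * (ωb 1 * ωb 2)) = 0 := by
  simp only [ω0, ω1, ω2, ωb0, ωb1, ωb2] at h1b h2b h3b h1bc h2bc h3bc
  refine ⟨?_, ?_, ?_, ?_, ?_, ?_⟩ <;>
    simp (config := { decide := true }) only [ω0, ω1, ω2, ωb0, ωb1, ωb2, mul_assoc,
      der_g hdb, h1b, h2b, h3b, h1bc, h2bc, h3bc, map_neg, map_smul, map_add, map_sub,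
      g_swap, g_swap', g_sq, g_sq', mul_neg, neg_mul, neg_neg, mul_add, add_mul, mul_sub, sub_mul,
      mul_zero, zero_mul, smul_mul_assoc, mul_smul_comm, map_zero, zero_sub, sub_zero, zero_add,
      add_zero, smul_zero, neg_zero, smul_neg, sub_self, sub_neg_eq_add,
      zero_smul, one_smul, neg_smul]

set_option maxHeartbeats 2000000 in
theorem dolbeault_aeppli_32_family_I_rho_one
    (lam : ℝ) (D : ℂ) (hlam : 0 ≤ lam)
    (d dl db : E →ₗ[ℂ] E)
    (hd : IsAntider d) (hdl : IsAntider dl) (hdb : IsAntider db)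
    (hsum : d = dl + db)
    (hdl2 : ∀ x, dl (dl x) = 0) (hdb2 : ∀ x, db (db x) = 0)
    (hanti : ∀ x, dl (db x) + db (dl x) = 0)
    (h1l : dl (ω 0) = 0) (h1b : db (ω 0) = 0)
    (h2l : dl (ω 1) = 0) (h2b : db (ω 1) = 0)
    (h3l : dl (ω 2) = ω 0 * ω 1)
    (h3b : db (ω 2) = ω 0 * ωb 0 + (lam : ℂ) • (ω 0 * ωb 1) + D • (ω 1 * ωb 1))
    (h1lc : dl (ωb 0) = 0) (h1bc : db (ωb 0) = 0)
    (h2lc : dl (ωb 1) = 0) (h2bc : db (ωb 1) = 0)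
    (h3lc : dl (ωb 2) = ωb 0 * ω 0 + (lam : ℂ) • (ωb 0 * ω 1)
      + (starRingEnd ℂ D) • (ωb 1 * ω 1))
    (h3bc : db (ωb 2) = ωb 0 * ωb 1) :
    -- H^{3,2}_∂̄ is spanned by the classes of a and b:
    Lam32 ⊓ ker db =
      span ℂ {ω 0 * ω 1 * ω 2 * (ωb 0 * ωb 2), ω 0 * ω 1 * ω 2 * (ωb 1 * ωb 2)} ⊔
        Submodule.map db Lam31 ∧
    -- H^{3,2}_A is spanned by the same classes:
    Lam32 =
      span ℂ {ω 0 * ω 1 * ω 2 * (ωb 0 * ωb 2), ω 0 * ω 1 * ω 2 * (ωb 1 * ωb 2)} ⊔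
        (Submodule.map dl Lam22 ⊔ Submodule.map db Lam31) ∧
    -- the natural map H^{3,2}_∂̄ → H^{3,2}_A is injective:
    ∀ α ∈ Lam32, db α = 0 →
      α ∈ Submodule.map dl Lam22 ⊔ Submodule.map db Lam31 →
        α ∈ Submodule.map db Lam31 := by
  have key := dlC lam D dl hdl h1l h2l h3l h1lc h2lc h3lc
  obtain ⟨e0, e1, e2, f01, f02, f12⟩ := dbA lam D db hdb h1b h2b h3b h1bc h2bc h3bc
  have hker : Lam32 ≤ ker db := by
    rw [Lam32, span_le]
    rintro x hx
    simp only [Set.mem_insert_iff, Set.mem_singleton_iff] at hx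
    rcases hx with rfl | rfl | rfl
    · exact mem_ker.mpr f01
    · exact mem_ker.mpr f02
    · exact mem_ker.mpr f12
  have hmapdb : Submodule.map db Lam31 =
      span ℂ {ω 0 * ω 1 * ω 2 * (ωb 0 * ωb 1)} := by
    apply le_antisymm
    · rw [Lam31, Submodule.map_span, span_le]
      rintro x ⟨y, ⟨k, rfl⟩, rfl⟩
      fin_cases k
      all_goals try simp only [f0, f1, f2]
      · rw [e0]; exact zero_mem _
      · rw [e1]; exact zero_mem _
      · rw [e2]; exact neg_mem (subset_span rfl)
    · rw [span_le, Set.singleton_subset_iff]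
      exact ⟨-(ω 0 * ω 1 * ω 2 * ωb 2), neg_mem (subset_span ⟨2, rfl⟩),
        by rw [map_neg, e2, neg_neg]⟩
  have hmapdl : Submodule.map dl Lam22 ≤
      span ℂ {ω 0 * ω 1 * ω 2 * (ωb 0 * ωb 1)} := by
    rw [Lam22, Submodule.map_span, span_le]
    rintro x ⟨y, ⟨⟨⟨p, q⟩, r, s⟩, rfl⟩, rfl⟩
    dsimp only
    rw [key p q r s]
    exact smul_mem _ _ (subset_span rfl)
  have hsup : Submodule.map dl Lam22 ⊔ Submodule.map db Lam31 = Submodule.map db Lam31 :=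
    sup_eq_right.mpr (hmapdl.trans hmapdb.ge)
  have hspan : span ℂ {ω 0 * ω 1 * ω 2 * (ωb 0 * ωb 2), ω 0 * ω 1 * ω 2 * (ωb 1 * ωb 2)} ⊔
      span ℂ {ω 0 * ω 1 * ω 2 * (ωb 0 * ωb 1)} = Lam32 := by
    rw [← span_union, Set.union_comm, Set.singleton_union]
    rfl
  refine ⟨?_, ?_, ?_⟩
  · rw [inf_eq_left.mpr hker, hmapdb, hspan]
  · rw [hsup, hmapdb, hspan]
  · intro α _ _ hmem
    rw [hsup] at hmem
    exact hmem

end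
end

section
/- Let M be a compact complex manifold and suppose the natural map H^{n,n-1}_∂̄(M) → H^{n,n-1}_A(M) (sending a Dolbeault class to its Aeppli class) is injective, where n = dim_ℂ M. Then any Gauduchon metric on M is strongly Gauduchon: if F is a positive (1,1)-form with ∂∂̄(F^{n-1}) = 0, then ∂(F^{n-1}) = ∂̄α for some (n, n-2)-form α. -/
/- STATEMENT 19.  Abstract model of the relevant part of the Dolbeault double complex of a
compact complex n-dimensional manifold M: X2 = Ω^{n,n-2}, X1 = Ω^{n,n-1}, X0 = Ω^{n,n},
Y = Ω^{n-1,n-1}, Z = Ω^{n-1,n}, with ∂̄ : X2 → X1 → X0, ∂ : Y → X1, ∂̄ : Y → Z, ∂ : Z → X0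
(all components of ∂ landing in column n+1 vanish).  At bidegree (n,n−1) the Dolbeault group is
ker ∂̄/im ∂̄ and the Aeppli group is X1/(im ∂ + im ∂̄).  Hypothesis: the natural map
H^{n,n-1}_∂̄ → H^{n,n-1}_A is injective.  Conclusion: any Gauduchon metric is strongly
Gauduchon — if G = F^{n-1} satisfies ∂∂̄G = 0, then ∂G is ∂̄-exact. -/

noncomputable section

open Submodule LinearMap

theorem gauduchon_is_strongly_gauduchon_of_injective
    (n : ℕ) (hn : 1 ≤ n)
    {X2 X1 X0 Y Z : Type}
    [AddCommGroup X2] [Module ℂ X2] [AddCommGroup X1] [Module ℂ X1]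
    [AddCommGroup X0] [Module ℂ X0] [AddCommGroup Y] [Module ℂ Y]
    [AddCommGroup Z] [Module ℂ Z]
    (dbX2 : X2 →ₗ[ℂ] X1)   -- ∂̄ : Ω^{n,n-2} → Ω^{n,n-1}
    (dbX1 : X1 →ₗ[ℂ] X0)   -- ∂̄ : Ω^{n,n-1} → Ω^{n,n}
    (dlY : Y →ₗ[ℂ] X1)     -- ∂ : Ω^{n-1,n-1} → Ω^{n,n-1}
    (dbY : Y →ₗ[ℂ] Z)      -- ∂̄ : Ω^{n-1,n-1} → Ω^{n-1,n}
    (dlZ : Z →ₗ[ℂ] X0)     -- ∂ : Ω^{n-1,n} → Ω^{n,n}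
    (hdb2 : ∀ x : X2, dbX1 (dbX2 x) = 0)
    (hanti : ∀ y : Y, dbX1 (dlY y) + dlZ (dbY y) = 0)
    -- the natural map H^{n,n-1}_∂̄(M) → H^{n,n-1}_A(M) is injective
    (hinj : ∀ α : X1, dbX1 α = 0 →
      α ∈ range dlY ⊔ range dbX2 → α ∈ range dbX2) :
    -- every Gauduchon metric is strongly Gauduchon: if G = F^{n-1} with ∂∂̄G = 0,
    -- then ∂G = ∂̄α for some α
    ∀ G : Y, dlZ (dbY G) = 0 → ∃ α : X2, dlY G = dbX2 α := by
  intro G hG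
  have h1 : dbX1 (dlY G) = 0 := by
    have := hanti G
    rw [hG] at this
    simpa using this
  have h2 : dlY G ∈ range dlY ⊔ range dbX2 :=
    Submodule.mem_sup_left ⟨G, rfl⟩
  obtain ⟨α, hα⟩ := hinj _ h1 h2
  exact ⟨α, hα.symm⟩

end
end
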